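/- Let (x^k)_{k≥1} ⊆ 𝒳 and (y^k)_{k≥1} ⊆ 𝒴 be sequences such that A x^k + B y^k = b for every k and limsup_{k→∞} g_i(x^k, y^k) ≤ 0 for every i = 1,…,p. Then liminf_{k→∞} [F(x^k, y^k) − Q(y^k)] ≥ 0. -/

import Mathlib

open Matrix Set Filter Topology

noncomputable section

private lemma liminf_comp_ereal (u : ℕ → EReal) (φ : ℕ → ℕ) :
    liminf (fun k => u (φ k)) atTop = liminf u (map φ atTop) := by
  rw [liminf, liminf, Filter.map_map]; rfl

private lemma limsup_comp_ereal (u : ℕ → EReal) (φ : ℕ → ℕ) :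
    limsup (fun k => u (φ k)) atTop = limsup u (map φ atTop) := by
  rw [limsup, limsup, Filter.map_map]; rfl

private lemma lsc_seq {X : Type*} [TopologicalSpace X] {f : X → EReal}
    (hf : LowerSemicontinuous f) {u : ℕ → X} {z : X} (hu : Tendsto u atTop (𝓝 z)) :
    f z ≤ liminf (fun k => f (u k)) atTop := by
  calc f z ≤ liminf f (𝓝 z) := LowerSemicontinuousAt.le_liminf (hf z)
  _ ≤ liminf f (map u atTop) := liminf_le_liminf_of_le hu
  _ = liminf (fun k => f (u k)) atTop := by rw [liminf, liminf, Filter.map_map]; rfl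

/-- along sequences that are asymptotically feasible (linear constraints hold and
`limsup gᵢ ≤ 0`), the objective value asymptotically dominates the value function:
`liminf [F(xᵏ,yᵏ) − Q(yᵏ)] ≥ 0`. -/
theorem stmt_7
    (n p q : ℕ)
    (𝒳 𝒴 : Set (EuclideanSpace ℝ (Fin n)))
    (h𝒳ne : 𝒳.Nonempty) (h𝒳cpt : IsCompact 𝒳)
    (h𝒴ne : 𝒴.Nonempty) (h𝒴cpt : IsCompact 𝒴)
    (A B : Matrix (Fin q) (Fin n) ℝ) (b : Fin q → ℝ)
    (F : EuclideanSpace ℝ (Fin n) → EuclideanSpace ℝ (Fin n) → EReal)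
    (hFlsc : LowerSemicontinuous
      (fun z : EuclideanSpace ℝ (Fin n) × EuclideanSpace ℝ (Fin n) => F z.1 z.2))
    (hFbot : ∀ x y, F x y ≠ ⊥)
    (g : Fin p → EuclideanSpace ℝ (Fin n) → EuclideanSpace ℝ (Fin n) → EReal)
    (hglsc : ∀ i, LowerSemicontinuous
      (fun z : EuclideanSpace ℝ (Fin n) × EuclideanSpace ℝ (Fin n) => g i z.1 z.2))
    (Q : EuclideanSpace ℝ (Fin n) → EReal)
    (hQ : ∀ y, Q y = sInf ((fun x => F x y) ''
      {x ∈ 𝒳 | (∀ i, g i x y ≤ 0) ∧ A.mulVec x + B.mulVec y = b}))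
    -- Q is real-valued and continuous on 𝒴
    (Qr : EuclideanSpace ℝ (Fin n) → ℝ)
    (hQr : ContinuousOn Qr 𝒴) (hQrQ : ∀ y ∈ 𝒴, Q y = (Qr y : EReal))
    (x y : ℕ → EuclideanSpace ℝ (Fin n))
    (hx : ∀ k, x k ∈ 𝒳) (hy : ∀ k, y k ∈ 𝒴)
    (heq : ∀ k, A.mulVec (x k) + B.mulVec (y k) = b)
    (hg : ∀ i, limsup (fun k => g i (x k) (y k)) atTop ≤ 0) :
    0 ≤ liminf (fun k => F (x k) (y k) - (Qr (y k) : EReal)) atTop := by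
  by_contra hcon
  push_neg at hcon
  obtain ⟨c, hc1, hc2⟩ := EReal.exists_between_coe_real hcon
  have hc0 : c < 0 := by exact_mod_cast hc2
  have hfreq : ∃ᶠ k in atTop, F (x k) (y k) - (Qr (y k) : EReal) < (c : EReal) :=
    frequently_lt_of_liminf_lt (by isBoundedDefault) hc1
  obtain ⟨φ₀, hφ₀mono, hφ₀⟩ := extraction_of_frequently_atTop hfreq
  have hmem : ∀ k, (x (φ₀ k), y (φ₀ k)) ∈ 𝒳 ×ˢ 𝒴 := fun k => ⟨hx _, hy _⟩
  obtain ⟨zlim, hzlim, φ₁, hφ₁mono, hφ₁⟩ := (h𝒳cpt.prod h𝒴cpt).tendsto_subseq hmem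
  obtain ⟨xl, yl⟩ := zlim
  set φ : ℕ → ℕ := φ₀ ∘ φ₁ with hφdef
  have hφmono : StrictMono φ := hφ₀mono.comp hφ₁mono
  have htend : Tendsto (fun k => (x (φ k), y (φ k))) atTop (𝓝 (xl, yl)) := hφ₁
  have hxt : Tendsto (fun k => x (φ k)) atTop (𝓝 xl) := (continuous_fst.tendsto _).comp htend
  have hyt : Tendsto (fun k => y (φ k)) atTop (𝓝 yl) := (continuous_snd.tendsto _).comp htend
  have hxl : xl ∈ 𝒳 := hzlim.1
  have hyl : yl ∈ 𝒴 := hzlim.2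
  -- g constraints at the limit
  have hgle : ∀ i, g i xl yl ≤ 0 := by
    intro i
    have h1 : g i xl yl ≤ liminf (fun k => g i (x (φ k)) (y (φ k))) atTop := by
      have := lsc_seq (hglsc i) htend
      simpa using this
    have h2 : liminf (fun k => g i (x (φ k)) (y (φ k))) atTop
        ≤ limsup (fun k => g i (x (φ k)) (y (φ k))) atTop := liminf_le_limsup
    have h3 : limsup (fun k => g i (x (φ k)) (y (φ k))) atTop
        ≤ limsup (fun k => g i (x k) (y k)) atTop := by
      rw [limsup_comp_ereal (fun k => g i (x k) (y k)) φ]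
      exact limsup_le_limsup_of_le hφmono.tendsto_atTop
    exact h1.trans (h2.trans (h3.trans (hg i)))
  -- linear constraint at the limit
  have hAB : A.mulVec xl + B.mulVec yl = b := by
    have hca : Continuous fun v : EuclideanSpace ℝ (Fin n) => A.mulVec v :=
      (Matrix.mulVecLin A).continuous_of_finiteDimensional.comp
        (PiLp.continuousLinearEquiv 2 ℝ (fun _ : Fin n => ℝ)).continuous
    have hcb : Continuous fun v : EuclideanSpace ℝ (Fin n) => B.mulVec v :=
      (Matrix.mulVecLin B).continuous_of_finiteDimensional.comp
        (PiLp.continuousLinearEquiv 2 ℝ (fun _ : Fin n => ℝ)).continuous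
    have h1 : Tendsto (fun k => A.mulVec (x (φ k)) + B.mulVec (y (φ k))) atTop
        (𝓝 (A.mulVec xl + B.mulVec yl)) :=
      ((hca.tendsto _).comp hxt).add ((hcb.tendsto _).comp hyt)
    have h2 : Tendsto (fun k => A.mulVec (x (φ k)) + B.mulVec (y (φ k))) atTop (𝓝 b) := by
      simp only [heq]; exact tendsto_const_nhds
    exact tendsto_nhds_unique h1 h2
  -- value function bound at the limit
  have hQF : Q yl ≤ F xl yl := by
    rw [hQ yl]
    exact sInf_le ⟨xl, ⟨hxl, hgle, hAB⟩, rfl⟩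
  -- Qr along the subsequence converges
  have hQrt : Tendsto (fun k => Qr (y (φ k))) atTop (𝓝 (Qr yl)) := by
    have hw : Tendsto (fun k => y (φ k)) atTop (𝓝[𝒴] yl) :=
      tendsto_nhdsWithin_of_tendsto_nhds_of_eventually_within _ hyt
        (Eventually.of_forall fun k => hy _)
    exact (hQr yl hyl).tendsto.comp hw
  -- F lsc bound
  have hFlb : F xl yl ≤ liminf (fun k => F (x (φ k)) (y (φ k))) atTop := by
    have := lsc_seq hFlsc htend
    simpa using this
  -- upper bound on F along subsequence
  have hub : ∀ k, F (x (φ k)) (y (φ k)) ≤ ((c + Qr (y (φ k)) : ℝ) : EReal) := by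
    intro k
    have h1 : F (x (φ k)) (y (φ k)) - (Qr (y (φ k)) : EReal) < (c : EReal) := hφ₀ (φ₁ k)
    have h2 : F (x (φ k)) (y (φ k)) - (Qr (y (φ k)) : EReal) + (Qr (y (φ k)) : EReal)
        ≤ (c : EReal) + (Qr (y (φ k)) : EReal) := add_le_add_left h1.le _
    rw [EReal.sub_add_cancel] at h2
    simpa [EReal.coe_add] using h2
  have hlim2 : liminf (fun k => ((c + Qr (y (φ k)) : ℝ) : EReal)) atTop
      = ((c + Qr yl : ℝ) : EReal) := by
    apply Tendsto.liminf_eq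
    exact (continuous_coe_real_ereal.tendsto _).comp (tendsto_const_nhds.add hQrt)
  have hchain : ((Qr yl : ℝ) : EReal) ≤ ((c + Qr yl : ℝ) : EReal) := by
    calc ((Qr yl : ℝ) : EReal) = Q yl := (hQrQ yl hyl).symm
    _ ≤ F xl yl := hQF
    _ ≤ liminf (fun k => F (x (φ k)) (y (φ k))) atTop := hFlb
    _ ≤ liminf (fun k => ((c + Qr (y (φ k)) : ℝ) : EReal)) atTop :=
        liminf_le_liminf (Eventually.of_forall hub)
    _ = ((c + Qr yl : ℝ) : EReal) := hlim2
  have : Qr yl ≤ c + Qr yl := by exact_mod_cast hchain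
  linarith
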